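/- For a finite group G, subgroups H, K ≤ G, and a commutative ring k, the map sending a double coset HxK ∈ H\G/K to the kG-linear map k[G/H] → k[G/K], gH ↦ Σ_{u ∈ H/(H ∩ ˣK)} guxK, is a k-linear isomorphism k[H\G/K] ≅ Hom_{kG}(k[G/H], k[G/K]). -/

import Mathlib

/-!
Statement 14 (Yoshida's lemma): for a finite group `G`, subgroups `H, K ≤ G`, and a
commutative ring `k`, the map sending a double coset `HxK ∈ H\G/K` to the `kG`-linear map
`k[G/H] → k[G/K]`, `gH ↦ Σ_{u ∈ H/(H ∩ ˣK)} guxK`, is a `k`-linear isomorphism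
`k[H\G/K] ≅ Hom_{kG}(k[G/H], k[G/K])`.

Here `k[G/H]` is the permutation `kG`-module `Rep.ofMulAction k G (G ⧸ H)`, `ˣK = xKx⁻¹`,
and the sum runs over (representatives of) the cosets of `H ∩ ˣK` in `H`.
-/

open CategoryTheory

universe u

set_option linter.unusedSectionVars false

open CategoryTheory



namespace YoshidaAux

variable {G : Type u} [Group G] (H K : Subgroup G)

/-- The natural map `G ⧸ K → H \ G / K`. -/
def toDoset : G ⧸ K → DoubleCoset.Quotient (H : Set G) (K : Set G) :=
  Quotient.lift (fun g => DoubleCoset.mk H K g) (fun a b hab => by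
    exact (DoubleCoset.eq H K a b).2
      ⟨1, H.one_mem, a⁻¹ * b, QuotientGroup.leftRel_apply.mp hab, by group⟩)

@[simp] lemma toDoset_mk (y : G) : toDoset H K (QuotientGroup.mk y) = DoubleCoset.mk H K y := rfl

lemma toDoset_smul {h : G} (hh : h ∈ H) (d : G ⧸ K) : toDoset H K (h • d) = toDoset H K d := by
  obtain ⟨y, rfl⟩ := QuotientGroup.mk_surjective d
  rw [MulAction.Quotient.smul_mk, smul_eq_mul, toDoset_mk, toDoset_mk]
  exact (DoubleCoset.eq H K _ _).2 ⟨h⁻¹, H.inv_mem hh, 1, K.one_mem, by group⟩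

variable [Finite G]

/-- The fiber of `toDoset` over `D`, as a `Finset`. -/
noncomputable def fib (D : DoubleCoset.Quotient (H : Set G) (K : Set G)) : Finset (G ⧸ K) :=
  (Set.toFinite {d : G ⧸ K | toDoset H K d = D}).toFinset

@[simp] lemma mem_fib {D : DoubleCoset.Quotient (H : Set G) (K : Set G)} {d : G ⧸ K} :
    d ∈ fib H K D ↔ toDoset H K d = D := by
  simp [fib]

lemma smul_mem_fib {D : DoubleCoset.Quotient (H : Set G) (K : Set G)} {d : G ⧸ K} {h : G}
    (hh : h ∈ H) (hd : d ∈ fib H K D) : h • d ∈ fib H K D := by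
  rw [mem_fib] at hd ⊢
  rw [toDoset_smul H K hh, hd]

lemma sum_fib_smul {M : Type*} [AddCommMonoid M] (D : DoubleCoset.Quotient (H : Set G) (K : Set G))
    {h : G} (hh : h ∈ H) (F : G ⧸ K → M) :
    ∑ d ∈ fib H K D, F (h • d) = ∑ d ∈ fib H K D, F d := by
  refine Finset.sum_nbij' (fun d => h • d) (fun d => h⁻¹ • d) ?_ ?_ ?_ ?_ ?_
  · exact fun d hd => smul_mem_fib H K hh hd
  · exact fun d hd => smul_mem_fib H K (H.inv_mem hh) hd
  · intro d _; simp [smul_smul]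
  · intro d _; simp [smul_smul]
  · intro d _; rfl

lemma exists_smul_eq_mk_out (d : G ⧸ K) :
    ∃ h ∈ H, h • d = QuotientGroup.mk (Quotient.out (toDoset H K d)) := by
  obtain ⟨y, rfl⟩ := QuotientGroup.mk_surjective d
  obtain ⟨h, kk, hh, hk, hout⟩ := DoubleCoset.mk_out_eq_mul H K y
  refine ⟨h, hh, ?_⟩
  rw [MulAction.Quotient.smul_mk, toDoset_mk, hout, smul_eq_mul]
  refine (QuotientGroup.eq).2 ?_
  have h1 : (h * y)⁻¹ * (h * y * kk) = kk := by group
  rw [h1]; exact hk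


variable (k : Type u) [CommRing k]

/-- single c 1 is the action of `Quotient.out c` on `single 1 1`. -/
lemma single_eq_rho_out (c : G ⧸ H) :
    (MonoidAlgebra.single c (1 : k)) =
      (Rep.ofMulAction k G (G ⧸ H)).ρ (Quotient.out c)
        (MonoidAlgebra.single (QuotientGroup.mk (1 : G)) (1 : k)) := by
  show _ = Representation.ofMulAction k G (G ⧸ H) _ _
  rw [Representation.ofMulAction_single]
  congr 1
  rw [MulAction.Quotient.smul_mk, smul_eq_mul, mul_one, QuotientGroup.out_eq']

/-- Underlying linear map of `phi`. -/
noncomputable def phiHom (D : DoubleCoset.Quotient (H : Set G) (K : Set G)) :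
    MonoidAlgebra k (G ⧸ H) →ₗ[k] MonoidAlgebra k (G ⧸ K) :=
  (Finsupp.lift _ k (G ⧸ H) fun c =>
    ∑ d ∈ fib H K D, MonoidAlgebra.single (Quotient.out c • d) (1 : k)) ∘ₗ
      (MonoidAlgebra.coeffLinearEquiv k).toLinearMap

lemma phiHom_single (D : DoubleCoset.Quotient (H : Set G) (K : Set G)) (c : G ⧸ H) :
    phiHom H K k D (MonoidAlgebra.single c 1) =
      ∑ d ∈ fib H K D, MonoidAlgebra.single (Quotient.out c • d) (1 : k) := by
  rw [phiHom, LinearMap.comp_apply, LinearEquiv.coe_coe, MonoidAlgebra.coeffLinearEquiv_apply,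
    MonoidAlgebra.coeff_single, Finsupp.lift_apply, Finsupp.sum_single_index (by simp), one_smul]

lemma phiHom_comm (D : DoubleCoset.Quotient (H : Set G) (K : Set G)) (g : G) :
    phiHom H K k D ∘ₗ Representation.ofMulAction k G (G ⧸ H) g =
      (Representation.ofMulAction k G (G ⧸ K) g) ∘ₗ phiHom H K k D := by
  refine MonoidAlgebra.lhom_ext' fun c => LinearMap.ext_ring ?_
  simp only [LinearMap.comp_apply, MonoidAlgebra.lsingle_apply]
  rw [Representation.ofMulAction_single, phiHom_single, phiHom_single, map_sum]
  have hmem : (g * Quotient.out c)⁻¹ * Quotient.out (g • c) ∈ H := by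
    rw [← QuotientGroup.eq, QuotientGroup.out_eq']
    conv_rhs => rw [← QuotientGroup.out_eq' c]
    rw [MulAction.Quotient.smul_mk, smul_eq_mul]
  have hout : Quotient.out (g • c) =
      g * Quotient.out c * ((g * Quotient.out c)⁻¹ * Quotient.out (g • c)) := by group
  calc ∑ d ∈ fib H K D, MonoidAlgebra.single (Quotient.out (g • c) • d) (1 : k)
      = ∑ d ∈ fib H K D, MonoidAlgebra.single
          (g • Quotient.out c • ((g * Quotient.out c)⁻¹ * Quotient.out (g • c)) • d) (1 : k) := by
        refine Finset.sum_congr rfl fun d _ => ?_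
        rw [← mul_smul, ← mul_smul, ← hout]
    _ = ∑ d ∈ fib H K D, MonoidAlgebra.single (g • Quotient.out c • d) (1 : k) :=
        sum_fib_smul H K D hmem fun d => MonoidAlgebra.single (g • Quotient.out c • d) (1 : k)
    _ = _ := by
        refine Finset.sum_congr rfl fun d _ => ?_
        rw [Representation.ofMulAction_single]

/-- The `kG`-map `k[G/H] → k[G/K]` attached to a double coset `D`. -/
noncomputable def phi (D : DoubleCoset.Quotient (H : Set G) (K : Set G)) :
    Rep.ofMulAction k G (G ⧸ H) ⟶ Rep.ofMulAction k G (G ⧸ K) :=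
  Rep.ofHom ⟨phiHom H K k D, fun g => phiHom_comm H K k D g⟩

/-- The forward linear map. -/
noncomputable def E : ((DoubleCoset.Quotient (H : Set G) (K : Set G)) →₀ k) →ₗ[k]
    (Rep.ofMulAction k G (G ⧸ H) ⟶ Rep.ofMulAction k G (G ⧸ K)) :=
  Finsupp.lift _ k _ (phi H K k)

@[simp] lemma E_single (D : DoubleCoset.Quotient (H : Set G) (K : Set G)) :
    E H K k (Finsupp.single D 1) = phi H K k D := by
  rw [E, Finsupp.lift_apply, Finsupp.sum_single_index (by simp), one_smul]

instance : Finite (DoubleCoset.Quotient (H : Set G) (K : Set G)) :=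
  Quotient.finite _

/-- Evaluation of a morphism at the identity coset. -/
noncomputable def wvec (f : Rep.ofMulAction k G (G ⧸ H) ⟶ Rep.ofMulAction k G (G ⧸ K)) :
    MonoidAlgebra k (G ⧸ K) :=
  f.hom (MonoidAlgebra.single (QuotientGroup.mk (1 : G)) (1 : k))

lemma wvec_add (f g : Rep.ofMulAction k G (G ⧸ H) ⟶ Rep.ofMulAction k G (G ⧸ K)) :
    wvec H K k (f + g) = wvec H K k f + wvec H K k g := by
  show (f + g).hom _ = _
  rw [Rep.add_hom]; rfl

lemma wvec_smul (r : k) (f : Rep.ofMulAction k G (G ⧸ H) ⟶ Rep.ofMulAction k G (G ⧸ K)) :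
    wvec H K k (r • f) = r • wvec H K k f := by
  show (r • f).hom _ = _
  rw [Rep.smul_hom]; rfl

/-- The inverse linear map. -/
noncomputable def inv : (Rep.ofMulAction k G (G ⧸ H) ⟶ Rep.ofMulAction k G (G ⧸ K)) →ₗ[k]
    ((DoubleCoset.Quotient (H : Set G) (K : Set G)) →₀ k) where
  toFun f := Finsupp.equivFunOnFinite.symm fun D =>
    (wvec H K k f).coeff (QuotientGroup.mk (Quotient.out D))
  map_add' f g := by
    ext D
    simp [wvec_add]
  map_smul' r f := by
    ext D
    simp [wvec_smul]


noncomputable instance : Fintype (G ⧸ K) := Fintype.ofFinite _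

noncomputable instance : Fintype (DoubleCoset.Quotient (H : Set G) (K : Set G)) := Fintype.ofFinite _

lemma wvec_invariant (f : Rep.ofMulAction k G (G ⧸ H) ⟶ Rep.ofMulAction k G (G ⧸ K))
    {h : G} (hh : h ∈ H) :
    (Rep.ofMulAction k G (G ⧸ K)).ρ h (wvec H K k f) = wvec H K k f := by
  rw [wvec, ← Rep.hom_comm_apply]
  congr 1
  show Representation.ofMulAction k G (G ⧸ H) h _ = _
  rw [Representation.ofMulAction_single]
  congr 1
  rw [MulAction.Quotient.smul_mk, smul_eq_mul, mul_one]
  exact (QuotientGroup.eq).2 (by simpa using H.inv_mem hh)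

lemma wvec_smul_apply (f : Rep.ofMulAction k G (G ⧸ H) ⟶ Rep.ofMulAction k G (G ⧸ K))
    {h : G} (hh : h ∈ H) (d : G ⧸ K) :
    (wvec H K k f).coeff (h • d) = (wvec H K k f).coeff d := by
  have h2 : Representation.ofMulAction k G (G ⧸ K) h (wvec H K k f) = wvec H K k f :=
    wvec_invariant H K k f hh
  have h3 := congrArg (fun v : MonoidAlgebra k (G ⧸ K) => v.coeff (h • d)) h2
  rw [Representation.coeff_ofMulAction, inv_smul_smul] at h3
  exact h3.symm

lemma sum_fib_partition {M : Type*} [AddCommMonoid M] (F : G ⧸ K → M) :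
    ∑ D : DoubleCoset.Quotient (H : Set G) (K : Set G), ∑ d ∈ fib H K D, F d = ∑ d : G ⧸ K, F d := by
  classical
  have huniv : (Finset.univ : Finset (G ⧸ K)) =
      (Finset.univ : Finset (DoubleCoset.Quotient (H : Set G) (K : Set G))).biUnion
        (fun D => fib H K D) := by
    ext d
    simp only [Finset.mem_univ, Finset.mem_biUnion, mem_fib, true_iff]
    exact ⟨toDoset H K d, trivial, rfl⟩
  rw [show (Finset.univ : Finset (G ⧸ K)) = _ from huniv, Finset.sum_biUnion]
  intro D1 _ D2 _ hne
  show Disjoint (fib H K D1) (fib H K D2)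
  rw [Finset.disjoint_left]
  intro d hd1 hd2
  rw [mem_fib] at hd1 hd2
  exact hne (hd1 ▸ hd2 ▸ rfl)

lemma out_one_mem : Quotient.out (QuotientGroup.mk (1 : G) : G ⧸ H) ∈ H := by
  have h1 := QuotientGroup.out_eq' (QuotientGroup.mk (1 : G) : G ⧸ H)
  have h2 := (QuotientGroup.eq).1 h1.symm
  simpa using h2

lemma inv_phi (D : DoubleCoset.Quotient (H : Set G) (K : Set G)) :
    inv H K k (phi H K k D) = Finsupp.single D 1 := by
  classical
  ext D'
  show (wvec H K k (phi H K k D)).coeff (QuotientGroup.mk (Quotient.out D')) = _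
  have h1 : wvec H K k (phi H K k D) = ∑ d ∈ fib H K D, MonoidAlgebra.single d (1 : k) := by
    show phiHom H K k D _ = _
    rw [phiHom_single]
    exact sum_fib_smul H K D (out_one_mem H) fun d => MonoidAlgebra.single d (1 : k)
  rw [h1, MonoidAlgebra.coeff_sum, Finsupp.finset_sum_apply]
  have hmem : (QuotientGroup.mk (Quotient.out D') ∈ fib H K D) ↔ D = D' := by
    rw [mem_fib, toDoset_mk, DoubleCoset.out_eq']
    exact eq_comm
  rw [Finset.sum_congr rfl fun d _ => MonoidAlgebra.coeff_single_apply,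
    Finset.sum_ite_eq' (fib H K D) (QuotientGroup.mk (Quotient.out D')) (fun _ => (1 : k)),
    Finsupp.single_apply]
  by_cases hD : D = D'
  · rw [if_pos (hmem.2 hD), if_pos hD]
  · rw [if_neg (fun hc => hD (hmem.1 hc)), if_neg hD]

lemma inv_comp_E : (inv H K k).comp (E H K k) = LinearMap.id := by
  refine Finsupp.lhom_ext' fun D => LinearMap.ext_ring ?_
  simp only [LinearMap.comp_apply, Finsupp.lsingle_apply, LinearMap.id_apply]
  rw [E_single, inv_phi]


lemma rho_eq_sum (g' : G) (w : MonoidAlgebra k (G ⧸ K)) :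
    Representation.ofMulAction k G (G ⧸ K) g' w =
      ∑ d : G ⧸ K, w.coeff d • MonoidAlgebra.single (g' • d) (1 : k) := by
  classical
  have hw : w = ∑ d : G ⧸ K, MonoidAlgebra.single d (w.coeff d) := by
    ext d'
    rw [MonoidAlgebra.coeff_sum, Finsupp.finset_sum_apply,
      Finset.sum_congr rfl fun d _ => MonoidAlgebra.coeff_single_apply,
      Finset.sum_ite_eq' Finset.univ d' (⇑w.coeff)]
    simp
  conv_lhs => rw [hw, map_sum]
  refine Finset.sum_congr rfl fun d _ => ?_
  rw [Representation.ofMulAction_single, MonoidAlgebra.smul_single', mul_one]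

lemma E_inv_apply (f : Rep.ofMulAction k G (G ⧸ H) ⟶ Rep.ofMulAction k G (G ⧸ K)) :
    E H K k (inv H K k f) = f := by
  refine Rep.hom_ext ?_
  refine Representation.IntertwiningMap.ext ?_
  refine MonoidAlgebra.lhom_ext' fun c => LinearMap.ext_ring ?_
  simp only [LinearMap.comp_apply, MonoidAlgebra.lsingle_apply,
    Representation.IntertwiningMap.toLinearMap_apply]
  set g0 := inv H K k f with hg0def
  have hg0 : ∀ D, g0 D = (wvec H K k f).coeff (QuotientGroup.mk (Quotient.out D)) := fun D => rfl
  have hE : (E H K k g0).hom = ∑ D ∈ g0.support, g0 D • (phi H K k D).hom := by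
    rw [E, Finsupp.lift_apply, Finsupp.sum, Rep.sum_hom]
    exact Finset.sum_congr rfl fun D _ => Rep.smul_hom _ _
  have happ : (E H K k g0).hom (MonoidAlgebra.single c (1 : k)) =
      ∑ D ∈ g0.support, g0 D • phiHom H K k D (MonoidAlgebra.single c (1 : k)) := by
    rw [hE, Representation.IntertwiningMap.sum_apply]
    exact Finset.sum_congr rfl fun D _ => rfl
  have hmid : ∀ D : DoubleCoset.Quotient (H : Set G) (K : Set G),
      g0 D • phiHom H K k D (MonoidAlgebra.single c (1 : k)) =
        ∑ d ∈ fib H K D, (wvec H K k f).coeff d •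
          MonoidAlgebra.single (Quotient.out c • d) (1 : k) := by
    intro D
    rw [phiHom_single, Finset.smul_sum]
    refine Finset.sum_congr rfl fun d hd => ?_
    rw [mem_fib] at hd
    obtain ⟨h, hh, hsm⟩ := exists_smul_eq_mk_out H K d
    rw [hg0, ← hd, ← hsm, wvec_smul_apply H K k f hh d]
  have hrhs : f.hom (MonoidAlgebra.single c (1 : k)) =
      Representation.ofMulAction k G (G ⧸ K) (Quotient.out c) (wvec H K k f) := by
    rw [single_eq_rho_out H k c]
    exact Rep.hom_comm_apply f _ _
  refine happ.trans (Eq.trans ?_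
    (hrhs.trans (rho_eq_sum K k (Quotient.out c) (wvec H K k f))).symm)
  rw [Finset.sum_subset (Finset.subset_univ g0.support)
    (fun D _ hD => by rw [Finsupp.notMem_support_iff.1 hD, zero_smul]),
    Finset.sum_congr rfl fun D _ => hmid D, sum_fib_partition]


/-- Yoshida's isomorphism. -/
noncomputable def equiv : ((DoubleCoset.Quotient (H : Set G) (K : Set G)) →₀ k) ≃ₗ[k]
    (Rep.ofMulAction k G (G ⧸ H) ⟶ Rep.ofMulAction k G (G ⧸ K)) :=
  LinearEquiv.ofLinear (E H K k) (inv H K k)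
    (LinearMap.ext fun f => E_inv_apply H K k f) (inv_comp_E H K k)

lemma phi_formula (x g : G) :
    phiHom H K k (DoubleCoset.mk H K x) (MonoidAlgebra.single (QuotientGroup.mk g : G ⧸ H) 1) =
      ∑ᶠ u : H ⧸ (K.map (MulAut.conj x).toMonoidHom).subgroupOf H,
        MonoidAlgebra.single
          (QuotientGroup.mk (g * ((Quotient.out u : H) : G) * x) : G ⧸ K) (1 : k) := by
  letI : Fintype (H ⧸ (K.map (MulAut.conj x).toMonoidHom).subgroupOf H) := Fintype.ofFinite _
  rw [finsum_eq_sum_of_fintype, phiHom_single]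
  set c : G ⧸ H := (QuotientGroup.mk g : G ⧸ H) with hc
  have hmem : g⁻¹ * Quotient.out c ∈ H := by
    rw [← QuotientGroup.eq, QuotientGroup.out_eq']
  have step1 : ∑ d ∈ fib H K (DoubleCoset.mk H K x), MonoidAlgebra.single (Quotient.out c • d) (1 : k)
      = ∑ d ∈ fib H K (DoubleCoset.mk H K x), MonoidAlgebra.single (g • d) (1 : k) := by
    have hout : Quotient.out c = g * (g⁻¹ * Quotient.out c) := by group
    calc ∑ d ∈ fib H K (DoubleCoset.mk H K x), MonoidAlgebra.single (Quotient.out c • d) (1 : k)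
        = ∑ d ∈ fib H K (DoubleCoset.mk H K x),
            MonoidAlgebra.single (g • (g⁻¹ * Quotient.out c) • d) (1 : k) := by
          refine Finset.sum_congr rfl fun d _ => ?_
          rw [← mul_smul, ← hout]
      _ = _ := sum_fib_smul H K _ hmem fun d => MonoidAlgebra.single (g • d) (1 : k)
  rw [step1]
  symm
  refine Finset.sum_bij
    (fun u _ => (QuotientGroup.mk (((Quotient.out u : H) : G) * x) : G ⧸ K)) ?_ ?_ ?_ ?_
  · intro u _
    rw [mem_fib, toDoset_mk]
    exact (DoubleCoset.eq H K _ _).2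
      ⟨(((Quotient.out u : H) : G))⁻¹, H.inv_mem (Quotient.out u).2, 1, K.one_mem, by group⟩
  · intro u₁ _ u₂ _ heq
    have hK := (QuotientGroup.eq).1 heq
    rw [← QuotientGroup.out_eq' u₁, ← QuotientGroup.out_eq' u₂]
    refine (QuotientGroup.eq).2 ?_
    rw [Subgroup.mem_subgroupOf]
    refine Subgroup.mem_map.2 ⟨(((Quotient.out u₁ : H) : G) * x)⁻¹ *
      (((Quotient.out u₂ : H) : G) * x), hK, ?_⟩
    show x * _ * x⁻¹ = _
    push_cast
    group
  · intro d hd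
    rw [mem_fib, ← QuotientGroup.out_eq' d, toDoset_mk] at hd
    obtain ⟨h, hh, kk, hk, hx⟩ := (DoubleCoset.eq H K _ _).1 hd
    refine ⟨QuotientGroup.mk ((⟨h, hh⟩ : H)⁻¹), Finset.mem_univ _, ?_⟩
    have hs : (⟨h, hh⟩ : H) * Quotient.out (QuotientGroup.mk ((⟨h, hh⟩ : H)⁻¹) :
        H ⧸ (K.map (MulAut.conj x).toMonoidHom).subgroupOf H) ∈
          (K.map (MulAut.conj x).toMonoidHom).subgroupOf H := by
      have h1 := QuotientGroup.out_eq' (QuotientGroup.mk ((⟨h, hh⟩ : H)⁻¹) :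
        H ⧸ (K.map (MulAut.conj x).toMonoidHom).subgroupOf H)
      have h2 := (QuotientGroup.eq).1 h1.symm
      simpa using h2
    rw [Subgroup.mem_subgroupOf] at hs
    obtain ⟨kk2, hk2, hconj⟩ := Subgroup.mem_map.1 hs
    have hconj' : x * kk2 * x⁻¹ = h * ((Quotient.out (QuotientGroup.mk ((⟨h, hh⟩ : H)⁻¹) :
        H ⧸ (K.map (MulAut.conj x).toMonoidHom).subgroupOf H) : H) : G) := by
      simpa [MulAut.conj_apply] using hconj
    rw [← QuotientGroup.out_eq' d]
    refine (QuotientGroup.eq).2 ?_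
    have e2 : ((Quotient.out (QuotientGroup.mk ((⟨h, hh⟩ : H)⁻¹) :
        H ⧸ (K.map (MulAut.conj x).toMonoidHom).subgroupOf H) : H) : G)
          = h⁻¹ * (x * kk2 * x⁻¹) := by rw [hconj']; group
    have e1 : Quotient.out d = h⁻¹ * x * kk⁻¹ := by rw [hx]; group
    have : (((Quotient.out (QuotientGroup.mk ((⟨h, hh⟩ : H)⁻¹) :
        H ⧸ (K.map (MulAut.conj x).toMonoidHom).subgroupOf H) : H) : G) * x)⁻¹ *
          Quotient.out d = kk2⁻¹ * kk⁻¹ := by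
      rw [e1, e2]; group
    rw [this]
    exact K.mul_mem (K.inv_mem hk2) (K.inv_mem hk)
  · intro u _
    congr 1
    rw [MulAction.Quotient.smul_mk, smul_eq_mul, mul_assoc]

end YoshidaAux

theorem yoshida_lemma (k G : Type u) [CommRing k] [Group G] [Finite G]
    (H K : Subgroup G) :
    ∃ e : ((DoubleCoset.Quotient (H : Set G) (K : Set G)) →₀ k) ≃ₗ[k]
        (Rep.ofMulAction k G (G ⧸ H) ⟶ Rep.ofMulAction k G (G ⧸ K)),
      ∀ (x g : G),
        (e (Finsupp.single (DoubleCoset.mk H K x) 1)).hom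
            (MonoidAlgebra.single (QuotientGroup.mk g : G ⧸ H) 1) =
          ∑ᶠ u : H ⧸ (K.map (MulAut.conj x).toMonoidHom).subgroupOf H,
            MonoidAlgebra.single
              (QuotientGroup.mk (g * ((Quotient.out u : H) : G) * x) : G ⧸ K) (1 : k) := by
  refine ⟨YoshidaAux.equiv H K k, fun x g => ?_⟩
  have h1 : YoshidaAux.equiv H K k (Finsupp.single (DoubleCoset.mk H K x) 1) =
      YoshidaAux.phi H K k (DoubleCoset.mk H K x) := by
    rw [YoshidaAux.equiv, LinearEquiv.ofLinear_apply, YoshidaAux.E_single]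
  rw [h1]
  exact YoshidaAux.phi_formula H K k x g
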